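/- Let J be a real symmetric n×n matrix and let Ω, M, P : ℝ → Matₙ(ℝ) be differentiable matrix-valued functions satisfying M(t) = JΩ(t) + Ω(t)J, Ṁ = [M,Ω] + [P,J], and Ṗ = [P,Ω] for all t. Then for every λ ∈ ℝ, the matrix L(t) := P(t) + λM(t) + λ²J² satisfies the Lax equation L̇(t) = [L(t), B(t)], where B(t) := Ω(t) + λJ. -/

import Mathlib

open Matrix

/-- Let `J` be a real symmetric `n × n` matrix and `Ω, M, P : ℝ → Matₙ(ℝ)` differentiable
matrix functions satisfying `M = JΩ + ΩJ`, `Ṁ = [M,Ω] + [P,J]`, `Ṗ = [P,Ω]`.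
Then for every `λ ∈ ℝ`, the matrix `L(t) = P(t) + λ M(t) + λ² J²` satisfies the Lax
equation `L̇ = [L, B]` with `B(t) = Ω(t) + λ J`. -/
theorem stmt_1 (n : ℕ) (J : Matrix (Fin n) (Fin n) ℝ) (hJ : Jᵀ = J)
    (Ω M P : ℝ → Matrix (Fin n) (Fin n) ℝ)
    (hΩ : ∀ i j, Differentiable ℝ fun t => Ω t i j)
    (hMdef : ∀ t, M t = J * Ω t + Ω t * J)
    (hM : ∀ t, ∀ i j, HasDerivAt (fun s => M s i j)
      ((M t * Ω t - Ω t * M t + (P t * J - J * P t)) i j) t)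
    (hP : ∀ t, ∀ i j, HasDerivAt (fun s => P s i j)
      ((P t * Ω t - Ω t * P t) i j) t)
    (lam : ℝ) :
    ∀ t, ∀ i j, HasDerivAt (fun s => (P s + lam • M s + (lam ^ 2) • J ^ 2) i j)
      (((P t + lam • M t + (lam ^ 2) • J ^ 2) * (Ω t + lam • J)
        - (Ω t + lam • J) * (P t + lam • M t + (lam ^ 2) • J ^ 2)) i j) t := by
  intro t i j
  have hmat : (P t + lam • M t + (lam ^ 2) • J ^ 2) * (Ω t + lam • J)
      - (Ω t + lam • J) * (P t + lam • M t + (lam ^ 2) • J ^ 2)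
      = (P t * Ω t - Ω t * P t)
        + lam • (M t * Ω t - Ω t * M t + (P t * J - J * P t)) := by
    rw [hMdef t]
    simp only [mul_add, add_mul, smul_mul_assoc, mul_smul_comm, smul_add, smul_sub, smul_smul]
    noncomm_ring
  have h := ((hP t i j).add ((hM t i j).const_mul lam)).add
    (hasDerivAt_const t (((lam ^ 2) • J ^ 2 : Matrix (Fin n) (Fin n) ℝ) i j))
  have hfun : (fun s => P s i j + lam * M s i j + ((lam ^ 2) • J ^ 2 : Matrix (Fin n) (Fin n) ℝ) i j)
      = fun s => (P s + lam • M s + (lam ^ 2) • J ^ 2) i j := by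
    funext s
    simp [Matrix.add_apply, Matrix.smul_apply]
  simp only [Pi.add_def] at h
  rw [hfun, add_zero] at h
  refine h.congr_deriv ?_
  rw [hmat]
  simp [Matrix.add_apply, Matrix.smul_apply]

  ring
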